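/- In the polynomial ring R = ℚ[x11, x22, x21, x12, x23, x13, x14, x24], the set of minimal primes over the ideal I generated by x11*x22 − x21*x12, x12*x23 − x22*x13, and x13*x24 − x23*x14 is exactly {Q1, Q2, Q3}, where Q1 is the ideal of the six 2×2 minors of the generic 2×4 matrix with rows (x11, x12, x13, x14) and (x21, x22, x23, x24), Q2 is the ideal generated by x13, x23, x11*x22 − x21*x12, and Q3 is the ideal generated by x12, x22, x23*x14 − x13*x24. In particular, the variety V(I) has exactly three irreducible components. -/

import Mathlib

open MvPolynomial

noncomputable section

abbrev R : Type := MvPolynomial (Fin 8) ℚ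

def x11 : R := X 0
def x22 : R := X 1
def x21 : R := X 2
def x12 : R := X 3
def x23 : R := X 4
def x13 : R := X 5
def x14 : R := X 6
def x24 : R := X 7

def I : Ideal R :=
  Ideal.span {x11 * x22 - x21 * x12, x12 * x23 - x22 * x13, x13 * x24 - x23 * x14}

def Q1 : Ideal R :=
  Ideal.span {x23 * x14 - x13 * x24, x21 * x14 - x11 * x24, x22 * x14 - x12 * x24,
    x12 * x23 - x22 * x13, x11 * x23 - x21 * x13, x11 * x22 - x21 * x12}

def Q2 : Ideal R := Ideal.span {x13, x23, x11 * x22 - x21 * x12}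

def Q3 : Ideal R := Ideal.span {x12, x22, x23 * x14 - x13 * x24}

namespace Aux

@[simp] lemma cons_val_five {α : Type*} {m : ℕ} (x : α) (u : Fin m.succ.succ.succ.succ.succ → α) :
    Matrix.vecCons x u 5 = Matrix.vecHead (Matrix.vecTail (Matrix.vecTail (Matrix.vecTail (Matrix.vecTail u)))) := rfl
@[simp] lemma cons_val_six {α : Type*} {m : ℕ} (x : α) (u : Fin m.succ.succ.succ.succ.succ.succ → α) :
    Matrix.vecCons x u 6 = Matrix.vecHead (Matrix.vecTail (Matrix.vecTail (Matrix.vecTail (Matrix.vecTail (Matrix.vecTail u))))) := rfl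
@[simp] lemma cons_val_seven {α : Type*} {m : ℕ} (x : α) (u : Fin m.succ.succ.succ.succ.succ.succ.succ → α) :
    Matrix.vecCons x u 7 = Matrix.vecHead (Matrix.vecTail (Matrix.vecTail (Matrix.vecTail (Matrix.vecTail (Matrix.vecTail (Matrix.vecTail u)))))) := rfl

/-! ### The Segre parametrization for Q1.
Codomain variables: s1=Y0, s2=Y1, t1..t4 = Y2..Y5.
Variables of `R`: X0=x11,X1=x22,X2=x21,X3=x12,X4=x23,X5=x13,X6=x14,X7=x24.
Row 1 vars (cols 1-4): X0,X3,X5,X6 ; row 2 vars: X2,X1,X4,X7. -/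
def pi1 : R →ₐ[ℚ] MvPolynomial (Fin 6) ℚ :=
  aeval ![X 0 * X 2, X 1 * X 3, X 1 * X 2, X 0 * X 3, X 1 * X 4, X 0 * X 4, X 0 * X 5, X 1 * X 5]

/-- exponent map on monomials induced by `pi1` -/
def eta1 (μ : Fin 8 →₀ ℕ) : Fin 6 →₀ ℕ :=
  Finsupp.equivFunOnFinite.symm
    ![μ 0 + μ 3 + μ 5 + μ 6, μ 2 + μ 1 + μ 4 + μ 7,
      μ 0 + μ 2, μ 3 + μ 1, μ 5 + μ 4, μ 6 + μ 7]

def dd (μ : Fin 8 →₀ ℕ) : ℕ := μ 2 + μ 1 + μ 4 + μ 7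
def bb1 (μ : Fin 8 →₀ ℕ) : ℕ := min (μ 0 + μ 2) (dd μ)
def bb2 (μ : Fin 8 →₀ ℕ) : ℕ := min (μ 3 + μ 1) (dd μ - bb1 μ)
def bb3 (μ : Fin 8 →₀ ℕ) : ℕ := min (μ 5 + μ 4) (dd μ - bb1 μ - bb2 μ)
def bb4 (μ : Fin 8 →₀ ℕ) : ℕ := dd μ - bb1 μ - bb2 μ - bb3 μ

/-- straightening map on exponents -/
def St (μ : Fin 8 →₀ ℕ) : Fin 8 →₀ ℕ :=
  Finsupp.equivFunOnFinite.symm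
    ![μ 0 + μ 2 - bb1 μ, bb2 μ, bb1 μ, μ 3 + μ 1 - bb2 μ,
      bb3 μ, μ 5 + μ 4 - bb3 μ, μ 6 + μ 7 - bb4 μ, bb4 μ]

lemma eta1_apply (μ : Fin 8 →₀ ℕ) (j : Fin 6) :
    eta1 μ j = ![μ 0 + μ 3 + μ 5 + μ 6, μ 2 + μ 1 + μ 4 + μ 7,
      μ 0 + μ 2, μ 3 + μ 1, μ 5 + μ 4, μ 6 + μ 7] j := by
  simp [eta1]

lemma St_apply (μ : Fin 8 →₀ ℕ) (i : Fin 8) :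
    St μ i = ![μ 0 + μ 2 - bb1 μ, bb2 μ, bb1 μ, μ 3 + μ 1 - bb2 μ,
      bb3 μ, μ 5 + μ 4 - bb3 μ, μ 6 + μ 7 - bb4 μ, bb4 μ] i := by
  simp [St]

/-- `St` only depends on the `eta1`-image. -/
lemma St_eq_of_eta1_eq {μ ν : Fin 8 →₀ ℕ} (h : eta1 μ = eta1 ν) : St μ = St ν := by
  have h1 : eta1 μ 1 = eta1 ν 1 := by rw [h]
  have h2 : eta1 μ 2 = eta1 ν 2 := by rw [h]
  have h3 : eta1 μ 3 = eta1 ν 3 := by rw [h]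
  have h4 : eta1 μ 4 = eta1 ν 4 := by rw [h]
  have h5 : eta1 μ 5 = eta1 ν 5 := by rw [h]
  rw [eta1_apply, eta1_apply] at h1 h2 h3 h4 h5
  simp only [Matrix.cons_val_zero, Matrix.cons_val_one, Matrix.cons_val_two, Matrix.cons_val_three,
    Matrix.cons_val_four, cons_val_five, Matrix.cons_val_succ, Matrix.head_cons,
    Matrix.vecTail, Matrix.vecHead, Function.comp] at h1 h2 h3 h4 h5
  have hd : dd μ = dd ν := h1
  have hb1 : bb1 μ = bb1 ν := by unfold bb1; rw [h2, hd]
  have hb2 : bb2 μ = bb2 ν := by unfold bb2; rw [h3, hd, hb1]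
  have hb3 : bb3 μ = bb3 ν := by unfold bb3; rw [h4, hd, hb1, hb2]
  have hb4 : bb4 μ = bb4 ν := by unfold bb4; rw [hd, hb1, hb2, hb3]
  ext i
  rw [St_apply, St_apply]
  fin_cases i <;> simp [h2, h3, h4, h5, hb1, hb2, hb3, hb4]

lemma eta1_St (μ : Fin 8 →₀ ℕ) : eta1 (St μ) = eta1 μ := by
  have ed : dd μ = μ 2 + μ 1 + μ 4 + μ 7 := rfl
  have eb1 : bb1 μ = min (μ 0 + μ 2) (dd μ) := rfl
  have eb2 : bb2 μ = min (μ 3 + μ 1) (dd μ - bb1 μ) := rfl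
  have eb3 : bb3 μ = min (μ 5 + μ 4) (dd μ - bb1 μ - bb2 μ) := rfl
  have eb4 : bb4 μ = dd μ - bb1 μ - bb2 μ - bb3 μ := rfl
  ext j
  rw [eta1_apply, eta1_apply]
  simp only [St_apply]
  fin_cases j <;> simp <;> omega

/-- straight exponents are fixed by St -/
lemma St_eq_self (μ : Fin 8 →₀ ℕ)
    (h12 : μ 0 = 0 ∨ μ 1 = 0) (h13 : μ 0 = 0 ∨ μ 4 = 0) (h14 : μ 0 = 0 ∨ μ 7 = 0)
    (h23 : μ 3 = 0 ∨ μ 4 = 0) (h24 : μ 3 = 0 ∨ μ 7 = 0) (h34 : μ 5 = 0 ∨ μ 7 = 0) :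
    St μ = μ := by
  have e1 : bb1 μ = μ 2 := by simp only [bb1, dd]; omega
  have e2 : bb2 μ = μ 1 := by simp only [bb2, bb1, dd]; omega
  have e3 : bb3 μ = μ 4 := by simp only [bb3, bb2, bb1, dd]; omega
  have e4 : bb4 μ = μ 7 := by simp only [bb4, bb3, bb2, bb1, dd]; omega
  ext i
  rw [St_apply]
  fin_cases i <;> simp [e1, e2, e3, e4] <;> omega


lemma swap_mem (u v w z : Fin 8) (h : (X u * X v - X w * X z : R) ∈ Q1) (ν : Fin 8 →₀ ℕ) :
    (monomial (ν + (Finsupp.single u 1 + Finsupp.single v 1)) (1:ℚ) : R)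
      - monomial (ν + (Finsupp.single w 1 + Finsupp.single z 1)) 1 ∈ Q1 := by
  have h2 := Ideal.mul_mem_left Q1 (monomial ν (1:ℚ)) h
  rw [mul_sub] at h2
  simp only [X, monomial_mul, one_mul, mul_one] at h2
  exact h2

def mm (μ : Fin 8 →₀ ℕ) : ℕ := μ 1 + 2 * μ 4 + 3 * μ 7

lemma gen12 : (X 0 * X 1 - X 2 * X 3 : R) ∈ Q1 :=
  Ideal.subset_span (by simp [x11, x22, x21, x12, Set.mem_insert_iff])
lemma gen13 : (X 0 * X 4 - X 2 * X 5 : R) ∈ Q1 :=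
  Ideal.subset_span (by simp [x11, x23, x21, x13, Set.mem_insert_iff])
lemma gen23 : (X 3 * X 4 - X 1 * X 5 : R) ∈ Q1 :=
  Ideal.subset_span (by simp [x12, x23, x22, x13, Set.mem_insert_iff])
lemma gen14 : (X 0 * X 7 - X 2 * X 6 : R) ∈ Q1 := by
  have h : (x21 * x14 - x11 * x24 : R) ∈ Q1 :=
    Ideal.subset_span (by simp [Set.mem_insert_iff])
  have h2 := Q1.neg_mem h
  have e : (X 0 * X 7 - X 2 * X 6 : R) = -(x21 * x14 - x11 * x24) := by
    simp [x21, x14, x11, x24]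
  rw [e]; exact h2
lemma gen24 : (X 3 * X 7 - X 1 * X 6 : R) ∈ Q1 := by
  have h : (x22 * x14 - x12 * x24 : R) ∈ Q1 :=
    Ideal.subset_span (by simp [Set.mem_insert_iff])
  have h2 := Q1.neg_mem h
  have e : (X 3 * X 7 - X 1 * X 6 : R) = -(x22 * x14 - x12 * x24) := by
    simp [x22, x14, x12, x24]
  rw [e]; exact h2
lemma gen34 : (X 5 * X 7 - X 4 * X 6 : R) ∈ Q1 := by
  have h : (x23 * x14 - x13 * x24 : R) ∈ Q1 :=
    Ideal.subset_span (by simp [Set.mem_insert_iff])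
  have h2 := Q1.neg_mem h
  have e : (X 5 * X 7 - X 4 * X 6 : R) = -(x23 * x14 - x13 * x24) := by
    simp [x23, x14, x13, x24]
  rw [e]; exact h2

lemma step12 (μ : Fin 8 →₀ ℕ) (hu : μ 0 ≠ 0) (hv : μ 1 ≠ 0) :
    ∃ μ' : Fin 8 →₀ ℕ, ((monomial μ (1:ℚ) : R) - monomial μ' 1 ∈ Q1) ∧ eta1 μ' = eta1 μ ∧ mm μ' < mm μ := by
  have happ : ∀ i : Fin 8, ((μ - Finsupp.single 0 1 - Finsupp.single 1 1
        + (Finsupp.single 2 1 + Finsupp.single 3 1) : Fin 8 →₀ ℕ)) i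
      = μ i - (if (0 : Fin 8) = i then 1 else 0) - (if (1 : Fin 8) = i then 1 else 0)
        + ((if (2 : Fin 8) = i then 1 else 0) + (if (3 : Fin 8) = i then 1 else 0)) := by
    intro i
    simp [Finsupp.single_apply, Finsupp.tsub_apply]
  have hA : μ = μ - Finsupp.single 0 1 - Finsupp.single 1 1
      + (Finsupp.single 0 1 + Finsupp.single 1 1) := by
    ext i
    simp only [Finsupp.add_apply, Finsupp.tsub_apply, Finsupp.single_apply]
    fin_cases i <;> simp <;> omega
  refine ⟨μ - Finsupp.single 0 1 - Finsupp.single 1 1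
      + (Finsupp.single 2 1 + Finsupp.single 3 1), ?_, ?_, ?_⟩
  · nth_rewrite 1 [hA]
    exact swap_mem 0 1 2 3 gen12 (μ - Finsupp.single 0 1 - Finsupp.single 1 1)
  · ext j
    rw [eta1_apply, eta1_apply]
    fin_cases j <;> simp [happ] <;> omega
  · have h1 := happ 1
    have h4 := happ 4
    have h7 := happ 7
    simp only [mm, h1, h4, h7]
    simp
    omega

lemma step13 (μ : Fin 8 →₀ ℕ) (hu : μ 0 ≠ 0) (hv : μ 4 ≠ 0) :
    ∃ μ' : Fin 8 →₀ ℕ, ((monomial μ (1:ℚ) : R) - monomial μ' 1 ∈ Q1) ∧ eta1 μ' = eta1 μ ∧ mm μ' < mm μ := by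
  have happ : ∀ i : Fin 8, ((μ - Finsupp.single 0 1 - Finsupp.single 4 1
        + (Finsupp.single 2 1 + Finsupp.single 5 1) : Fin 8 →₀ ℕ)) i
      = μ i - (if (0 : Fin 8) = i then 1 else 0) - (if (4 : Fin 8) = i then 1 else 0)
        + ((if (2 : Fin 8) = i then 1 else 0) + (if (5 : Fin 8) = i then 1 else 0)) := by
    intro i
    simp [Finsupp.single_apply, Finsupp.tsub_apply]
  have hA : μ = μ - Finsupp.single 0 1 - Finsupp.single 4 1
      + (Finsupp.single 0 1 + Finsupp.single 4 1) := by
    ext i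
    simp only [Finsupp.add_apply, Finsupp.tsub_apply, Finsupp.single_apply]
    fin_cases i <;> simp <;> omega
  refine ⟨μ - Finsupp.single 0 1 - Finsupp.single 4 1
      + (Finsupp.single 2 1 + Finsupp.single 5 1), ?_, ?_, ?_⟩
  · nth_rewrite 1 [hA]
    exact swap_mem 0 4 2 5 gen13 (μ - Finsupp.single 0 1 - Finsupp.single 4 1)
  · ext j
    rw [eta1_apply, eta1_apply]
    fin_cases j <;> simp [happ] <;> omega
  · have h1 := happ 1
    have h4 := happ 4
    have h7 := happ 7
    simp only [mm, h1, h4, h7]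
    simp
    omega

lemma step14 (μ : Fin 8 →₀ ℕ) (hu : μ 0 ≠ 0) (hv : μ 7 ≠ 0) :
    ∃ μ' : Fin 8 →₀ ℕ, ((monomial μ (1:ℚ) : R) - monomial μ' 1 ∈ Q1) ∧ eta1 μ' = eta1 μ ∧ mm μ' < mm μ := by
  have happ : ∀ i : Fin 8, ((μ - Finsupp.single 0 1 - Finsupp.single 7 1
        + (Finsupp.single 2 1 + Finsupp.single 6 1) : Fin 8 →₀ ℕ)) i
      = μ i - (if (0 : Fin 8) = i then 1 else 0) - (if (7 : Fin 8) = i then 1 else 0)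
        + ((if (2 : Fin 8) = i then 1 else 0) + (if (6 : Fin 8) = i then 1 else 0)) := by
    intro i
    simp [Finsupp.single_apply, Finsupp.tsub_apply]
  have hA : μ = μ - Finsupp.single 0 1 - Finsupp.single 7 1
      + (Finsupp.single 0 1 + Finsupp.single 7 1) := by
    ext i
    simp only [Finsupp.add_apply, Finsupp.tsub_apply, Finsupp.single_apply]
    fin_cases i <;> simp <;> omega
  refine ⟨μ - Finsupp.single 0 1 - Finsupp.single 7 1
      + (Finsupp.single 2 1 + Finsupp.single 6 1), ?_, ?_, ?_⟩
  · nth_rewrite 1 [hA]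
    exact swap_mem 0 7 2 6 gen14 (μ - Finsupp.single 0 1 - Finsupp.single 7 1)
  · ext j
    rw [eta1_apply, eta1_apply]
    fin_cases j <;> simp [happ] <;> omega
  · have h1 := happ 1
    have h4 := happ 4
    have h7 := happ 7
    simp only [mm, h1, h4, h7]
    simp
    omega

lemma step23 (μ : Fin 8 →₀ ℕ) (hu : μ 3 ≠ 0) (hv : μ 4 ≠ 0) :
    ∃ μ' : Fin 8 →₀ ℕ, ((monomial μ (1:ℚ) : R) - monomial μ' 1 ∈ Q1) ∧ eta1 μ' = eta1 μ ∧ mm μ' < mm μ := by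
  have happ : ∀ i : Fin 8, ((μ - Finsupp.single 3 1 - Finsupp.single 4 1
        + (Finsupp.single 1 1 + Finsupp.single 5 1) : Fin 8 →₀ ℕ)) i
      = μ i - (if (3 : Fin 8) = i then 1 else 0) - (if (4 : Fin 8) = i then 1 else 0)
        + ((if (1 : Fin 8) = i then 1 else 0) + (if (5 : Fin 8) = i then 1 else 0)) := by
    intro i
    simp [Finsupp.single_apply, Finsupp.tsub_apply]
  have hA : μ = μ - Finsupp.single 3 1 - Finsupp.single 4 1
      + (Finsupp.single 3 1 + Finsupp.single 4 1) := by
    ext i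
    simp only [Finsupp.add_apply, Finsupp.tsub_apply, Finsupp.single_apply]
    fin_cases i <;> simp <;> omega
  refine ⟨μ - Finsupp.single 3 1 - Finsupp.single 4 1
      + (Finsupp.single 1 1 + Finsupp.single 5 1), ?_, ?_, ?_⟩
  · nth_rewrite 1 [hA]
    exact swap_mem 3 4 1 5 gen23 (μ - Finsupp.single 3 1 - Finsupp.single 4 1)
  · ext j
    rw [eta1_apply, eta1_apply]
    fin_cases j <;> simp [happ] <;> omega
  · have h1 := happ 1
    have h4 := happ 4
    have h7 := happ 7
    simp only [mm, h1, h4, h7]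
    simp
    omega

lemma step24 (μ : Fin 8 →₀ ℕ) (hu : μ 3 ≠ 0) (hv : μ 7 ≠ 0) :
    ∃ μ' : Fin 8 →₀ ℕ, ((monomial μ (1:ℚ) : R) - monomial μ' 1 ∈ Q1) ∧ eta1 μ' = eta1 μ ∧ mm μ' < mm μ := by
  have happ : ∀ i : Fin 8, ((μ - Finsupp.single 3 1 - Finsupp.single 7 1
        + (Finsupp.single 1 1 + Finsupp.single 6 1) : Fin 8 →₀ ℕ)) i
      = μ i - (if (3 : Fin 8) = i then 1 else 0) - (if (7 : Fin 8) = i then 1 else 0)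
        + ((if (1 : Fin 8) = i then 1 else 0) + (if (6 : Fin 8) = i then 1 else 0)) := by
    intro i
    simp [Finsupp.single_apply, Finsupp.tsub_apply]
  have hA : μ = μ - Finsupp.single 3 1 - Finsupp.single 7 1
      + (Finsupp.single 3 1 + Finsupp.single 7 1) := by
    ext i
    simp only [Finsupp.add_apply, Finsupp.tsub_apply, Finsupp.single_apply]
    fin_cases i <;> simp <;> omega
  refine ⟨μ - Finsupp.single 3 1 - Finsupp.single 7 1
      + (Finsupp.single 1 1 + Finsupp.single 6 1), ?_, ?_, ?_⟩
  · nth_rewrite 1 [hA]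
    exact swap_mem 3 7 1 6 gen24 (μ - Finsupp.single 3 1 - Finsupp.single 7 1)
  · ext j
    rw [eta1_apply, eta1_apply]
    fin_cases j <;> simp [happ] <;> omega
  · have h1 := happ 1
    have h4 := happ 4
    have h7 := happ 7
    simp only [mm, h1, h4, h7]
    simp
    omega

lemma step34 (μ : Fin 8 →₀ ℕ) (hu : μ 5 ≠ 0) (hv : μ 7 ≠ 0) :
    ∃ μ' : Fin 8 →₀ ℕ, ((monomial μ (1:ℚ) : R) - monomial μ' 1 ∈ Q1) ∧ eta1 μ' = eta1 μ ∧ mm μ' < mm μ := by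
  have happ : ∀ i : Fin 8, ((μ - Finsupp.single 5 1 - Finsupp.single 7 1
        + (Finsupp.single 4 1 + Finsupp.single 6 1) : Fin 8 →₀ ℕ)) i
      = μ i - (if (5 : Fin 8) = i then 1 else 0) - (if (7 : Fin 8) = i then 1 else 0)
        + ((if (4 : Fin 8) = i then 1 else 0) + (if (6 : Fin 8) = i then 1 else 0)) := by
    intro i
    simp [Finsupp.single_apply, Finsupp.tsub_apply]
  have hA : μ = μ - Finsupp.single 5 1 - Finsupp.single 7 1
      + (Finsupp.single 5 1 + Finsupp.single 7 1) := by
    ext i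
    simp only [Finsupp.add_apply, Finsupp.tsub_apply, Finsupp.single_apply]
    fin_cases i <;> simp <;> omega
  refine ⟨μ - Finsupp.single 5 1 - Finsupp.single 7 1
      + (Finsupp.single 4 1 + Finsupp.single 6 1), ?_, ?_, ?_⟩
  · nth_rewrite 1 [hA]
    exact swap_mem 5 7 4 6 gen34 (μ - Finsupp.single 5 1 - Finsupp.single 7 1)
  · ext j
    rw [eta1_apply, eta1_apply]
    fin_cases j <;> simp [happ] <;> omega
  · have h1 := happ 1
    have h4 := happ 4
    have h7 := happ 7
    simp only [mm, h1, h4, h7]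
    simp
    omega

lemma monomial_sub_St_mem : ∀ (n : ℕ) (μ : Fin 8 →₀ ℕ), mm μ ≤ n →
    (monomial μ (1:ℚ) : R) - monomial (St μ) 1 ∈ Q1 := by
  intro n
  induction n with
  | zero =>
    intro μ hμ
    simp only [mm] at hμ
    have hSt : St μ = μ :=
      St_eq_self μ (by omega) (by omega) (by omega) (by omega) (by omega) (by omega)
    rw [hSt, sub_self]
    exact zero_mem _
  | succ n ih =>
    intro μ hμ
    have combine : ∀ μ' : Fin 8 →₀ ℕ,
        ((monomial μ (1:ℚ) : R) - monomial μ' 1 ∈ Q1) → eta1 μ' = eta1 μ → mm μ' < mm μ →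
        (monomial μ (1:ℚ) : R) - monomial (St μ) 1 ∈ Q1 := by
      intro μ' hQ he hm
      have hSt : St μ' = St μ := St_eq_of_eta1_eq he
      have h2 := ih μ' (by omega)
      have e : (monomial μ (1:ℚ) : R) - monomial (St μ) 1
          = (monomial μ 1 - monomial μ' 1) + (monomial μ' 1 - monomial (St μ') 1) := by
        rw [hSt]; ring
      rw [e]
      exact Ideal.add_mem _ hQ h2
    by_cases c12 : μ 0 ≠ 0 ∧ μ 1 ≠ 0
    · obtain ⟨μ', hQ, he, hm⟩ := step12 μ c12.1 c12.2
      exact combine μ' hQ he hm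
    by_cases c13 : μ 0 ≠ 0 ∧ μ 4 ≠ 0
    · obtain ⟨μ', hQ, he, hm⟩ := step13 μ c13.1 c13.2
      exact combine μ' hQ he hm
    by_cases c14 : μ 0 ≠ 0 ∧ μ 7 ≠ 0
    · obtain ⟨μ', hQ, he, hm⟩ := step14 μ c14.1 c14.2
      exact combine μ' hQ he hm
    by_cases c23 : μ 3 ≠ 0 ∧ μ 4 ≠ 0
    · obtain ⟨μ', hQ, he, hm⟩ := step23 μ c23.1 c23.2
      exact combine μ' hQ he hm
    by_cases c24 : μ 3 ≠ 0 ∧ μ 7 ≠ 0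
    · obtain ⟨μ', hQ, he, hm⟩ := step24 μ c24.1 c24.2
      exact combine μ' hQ he hm
    by_cases c34 : μ 5 ≠ 0 ∧ μ 7 ≠ 0
    · obtain ⟨μ', hQ, he, hm⟩ := step34 μ c34.1 c34.2
      exact combine μ' hQ he hm
    have hSt : St μ = μ :=
      St_eq_self μ (by omega) (by omega) (by omega) (by omega) (by omega) (by omega)
    rw [hSt, sub_self]
    exact zero_mem _

lemma pi1_monomial (μ : Fin 8 →₀ ℕ) (c : ℚ) :
    pi1 (monomial μ c) = monomial (eta1 μ) c := by
  rw [pi1, aeval_monomial, Finsupp.prod_fintype _ _ (fun i => pow_zero _),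
    monomial_eq, Finsupp.prod_fintype _ _ (fun i => pow_zero _)]
  have : (algebraMap ℚ (MvPolynomial (Fin 6) ℚ)) c = C c := rfl
  rw [this]
  refine congrArg (fun p => C c * p) ?_
  rw [Fin.prod_univ_eight, Fin.prod_univ_six]
  simp only [eta1_apply]
  simp only [Matrix.cons_val_zero, Matrix.cons_val_one, Matrix.cons_val_two, Matrix.cons_val_three,
    Matrix.cons_val_four, cons_val_five, cons_val_six, cons_val_seven, Matrix.cons_val_succ,
    Matrix.head_cons, Matrix.vecTail, Matrix.vecHead, Function.comp]
  rw [pow_add, pow_add, pow_add, pow_add, pow_add, pow_add, pow_add, pow_add, pow_add, pow_add]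
  ring

lemma Q1_le_ker : Q1 ≤ RingHom.ker pi1.toRingHom := by
  rw [Q1, Ideal.span_le]
  rintro f hf
  simp only [Set.mem_insert_iff, Set.mem_singleton_iff] at hf
  have expand : ∀ g : R, g ∈ RingHom.ker pi1.toRingHom ↔ pi1 g = 0 := fun g => Iff.rfl
  rcases hf with h|h|h|h|h|h <;> subst h <;> rw [SetLike.mem_coe, expand] <;>
    simp [pi1, x11, x22, x21, x12, x23, x13, x14, x24] <;> ring

lemma ker_le_Q1 : RingHom.ker pi1.toRingHom ≤ Q1 := by
  intro f hf
  have hπf : pi1 f = 0 := hf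
  -- normal form
  set nf : R := ∑ μ ∈ f.support, monomial (St μ) (coeff μ f) with hnf
  have hsub : f - nf ∈ Q1 := by
    have e : f - nf = ∑ μ ∈ f.support, (monomial μ (coeff μ f) - monomial (St μ) (coeff μ f)) := by
      rw [Finset.sum_sub_distrib, hnf]
      congr 1
      exact f.as_sum
    rw [e]
    refine Ideal.sum_mem _ fun μ _ => ?_
    have e2 : (monomial μ (coeff μ f) : R) - monomial (St μ) (coeff μ f)
        = C (coeff μ f) * (monomial μ 1 - monomial (St μ) 1) := by
      rw [mul_sub, C_mul_monomial, C_mul_monomial, mul_one]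
    rw [e2]
    exact Ideal.mul_mem_left _ _ (monomial_sub_St_mem (mm μ) μ le_rfl)
  have hπnf : pi1 nf = 0 := by
    have : pi1 (f - nf) = 0 := Q1_le_ker hsub
    rw [map_sub, hπf, zero_sub, neg_eq_zero] at this
    exact this
  have hnf0 : nf = 0 := by
    rw [hnf]
    ext ρ
    rw [coeff_sum]
    simp only [coeff_monomial, coeff_zero]
    by_cases hex : ∃ μ₀ ∈ f.support, St μ₀ = ρ
    · obtain ⟨μ₀, hμ₀s, hμ₀⟩ := hex
      have hcoe : ∀ μ ∈ f.support, (if St μ = ρ then coeff μ f else 0)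
          = (if eta1 μ = eta1 μ₀ then coeff μ f else 0) := by
        intro μ _
        congr 1
        apply propext
        constructor
        · intro hS
          rw [← eta1_St μ, hS, ← hμ₀, eta1_St]
        · intro hE
          rw [St_eq_of_eta1_eq hE, hμ₀]
      rw [Finset.sum_congr rfl hcoe]
      have hπf2 : pi1 nf = ∑ μ ∈ f.support, monomial (eta1 (St μ)) (coeff μ f) := by
        rw [hnf, map_sum]
        congr 1
        funext μ
        exact pi1_monomial (St μ) (coeff μ f)
      have : coeff (eta1 μ₀) (pi1 nf) = 0 := by rw [hπnf, coeff_zero]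
      rw [hπf2, coeff_sum] at this
      simp only [coeff_monomial, eta1_St] at this
      exact this
    · push_neg at hex
      refine Finset.sum_eq_zero fun μ hμ => ?_
      rw [if_neg (hex μ hμ)]
  rw [hnf0, sub_zero] at hsub
  exact hsub

lemma Q1_eq_ker : Q1 = RingHom.ker pi1.toRingHom := le_antisymm Q1_le_ker ker_le_Q1

lemma Q1_isPrime : Q1.IsPrime := by
  rw [Q1_eq_ker]
  exact RingHom.ker_isPrime _

/-! ### machinery for J2 = span {x11*x22 - x21*x12} -/

def J2 : Ideal R := Ideal.span {(X 0 * X 1 - X 2 * X 3 : R)}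

def pi2 : R →ₐ[ℚ] MvPolynomial (Fin 8) ℚ := aeval ![X 0 * X 2, X 1 * X 3, X 1 * X 2, X 0 * X 3, X 4, X 5, X 6, X 7]

def eta2 (μ : Fin 8 →₀ ℕ) : Fin 8 →₀ ℕ :=
  Finsupp.equivFunOnFinite.symm ![μ 0 + μ 3, μ 2 + μ 1, μ 0 + μ 2, μ 3 + μ 1, μ 4, μ 5, μ 6, μ 7]

def ee2 (μ : Fin 8 →₀ ℕ) : ℕ := min (μ 0) (μ 1)

def St2 (μ : Fin 8 →₀ ℕ) : Fin 8 →₀ ℕ :=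
  Finsupp.equivFunOnFinite.symm ![μ 0 - ee2 μ, μ 1 - ee2 μ, μ 2 + ee2 μ, μ 3 + ee2 μ, μ 4, μ 5, μ 6, μ 7]

lemma eta2_apply (μ : Fin 8 →₀ ℕ) (j : Fin 8) : eta2 μ j = ![μ 0 + μ 3, μ 2 + μ 1, μ 0 + μ 2, μ 3 + μ 1, μ 4, μ 5, μ 6, μ 7] j := by
  simp [eta2]

lemma St2_apply (μ : Fin 8 →₀ ℕ) (i : Fin 8) : St2 μ i = ![μ 0 - ee2 μ, μ 1 - ee2 μ, μ 2 + ee2 μ, μ 3 + ee2 μ, μ 4, μ 5, μ 6, μ 7] i := by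
  simp [St2]

lemma St2_eq_of_eta2_eq {μ ν : Fin 8 →₀ ℕ} (h : eta2 μ = eta2 ν) : St2 μ = St2 ν := by
  have h0 : eta2 μ 0 = eta2 ν 0 := by rw [h]
  have h1 : eta2 μ 1 = eta2 ν 1 := by rw [h]
  have h2 : eta2 μ 2 = eta2 ν 2 := by rw [h]
  have h3 : eta2 μ 3 = eta2 ν 3 := by rw [h]
  have h4 : eta2 μ 4 = eta2 ν 4 := by rw [h]
  have h5 : eta2 μ 5 = eta2 ν 5 := by rw [h]
  have h6 : eta2 μ 6 = eta2 ν 6 := by rw [h]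
  have h7 : eta2 μ 7 = eta2 ν 7 := by rw [h]
  rw [eta2_apply, eta2_apply] at h0 h1 h2 h3 h4 h5 h6 h7
  simp only [Matrix.cons_val_zero, Matrix.cons_val_one, Matrix.cons_val_two, Matrix.cons_val_three,
    Matrix.cons_val_four, cons_val_five, cons_val_six, cons_val_seven, Matrix.cons_val_succ,
    Matrix.head_cons, Matrix.vecTail, Matrix.vecHead, Function.comp] at h0 h1 h2 h3 h4 h5 h6 h7
  ext i
  rw [St2_apply, St2_apply]
  simp only [ee2]
  fin_cases i <;> simp <;> omega

lemma eta2_St2 (μ : Fin 8 →₀ ℕ) : eta2 (St2 μ) = eta2 μ := by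
  have he : ee2 μ = min (μ 0) (μ 1) := rfl
  ext j
  rw [eta2_apply, eta2_apply]
  simp only [St2_apply]
  fin_cases j <;> simp <;> omega

lemma monomial_sub_St2_mem (μ : Fin 8 →₀ ℕ) :
    (monomial μ (1:ℚ) : R) - monomial (St2 μ) 1 ∈ J2 := by
  have hgen : (X 0 * X 1 - X 2 * X 3 : R) ∈ J2 := Ideal.subset_span rfl
  have he1 : ee2 μ ≤ μ 0 := min_le_left _ _
  have he2 : ee2 μ ≤ μ 1 := min_le_right _ _
  have hA : μ = μ - Finsupp.single 0 (ee2 μ) - Finsupp.single 1 (ee2 μ)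
      + ee2 μ • (Finsupp.single 0 1 + Finsupp.single 1 1) := by
    ext i
    simp only [Finsupp.add_apply, Finsupp.tsub_apply, Finsupp.single_apply, Finsupp.smul_apply,
      smul_eq_mul]
    fin_cases i <;> simp <;> omega
  have hB : St2 μ = μ - Finsupp.single 0 (ee2 μ) - Finsupp.single 1 (ee2 μ)
      + ee2 μ • (Finsupp.single 2 1 + Finsupp.single 3 1) := by
    ext i
    rw [St2_apply]
    simp only [Finsupp.add_apply, Finsupp.tsub_apply, Finsupp.single_apply, Finsupp.smul_apply,
      smul_eq_mul]
    have he : ee2 μ = min (μ 0) (μ 1) := rfl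
    fin_cases i <;> simp <;> omega
  have hfac : ∀ (u v : Fin 8) (τ : Fin 8 →₀ ℕ),
      (monomial (τ + ee2 μ • (Finsupp.single u 1 + Finsupp.single v 1)) (1:ℚ) : R)
        = monomial τ 1 * (X u * X v) ^ ee2 μ := by
    intro u v τ
    simp only [X, monomial_mul, monomial_pow, one_pow, mul_one, one_mul]
  rw [hB]
  nth_rewrite 1 [hA]
  rw [hfac, hfac, ← mul_sub]
  refine Ideal.mul_mem_left _ _ ?_
  rw [J2, Ideal.mem_span_singleton]
  exact sub_dvd_pow_sub_pow _ _ _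

lemma pi2_monomial (μ : Fin 8 →₀ ℕ) (c : ℚ) :
    pi2 (monomial μ c) = monomial (eta2 μ) c := by
  rw [pi2, aeval_monomial, Finsupp.prod_fintype _ _ (fun i => pow_zero _),
    monomial_eq, Finsupp.prod_fintype _ _ (fun i => pow_zero _)]
  have : (algebraMap ℚ (MvPolynomial (Fin 8) ℚ)) c = C c := rfl
  rw [this]
  refine congrArg (fun p => C c * p) ?_
  rw [Fin.prod_univ_eight, Fin.prod_univ_eight]
  simp only [eta2_apply]
  simp only [Matrix.cons_val_zero, Matrix.cons_val_one, Matrix.cons_val_two, Matrix.cons_val_three,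
    Matrix.cons_val_four, cons_val_five, cons_val_six, cons_val_seven, Matrix.cons_val_succ,
    Matrix.head_cons, Matrix.vecTail, Matrix.vecHead, Function.comp]
  rw [pow_add, pow_add, pow_add, pow_add]
  ring

lemma J2_le_ker : J2 ≤ RingHom.ker pi2.toRingHom := by
  rw [J2, Ideal.span_le]
  rintro f hf
  simp only [Set.mem_singleton_iff] at hf
  subst hf
  rw [SetLike.mem_coe]
  show pi2 _ = 0
  simp [pi2]
  ring

lemma ker_le_J2 : RingHom.ker pi2.toRingHom ≤ J2 := by
  intro f hf
  have hπf : pi2 f = 0 := hf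
  set nf : R := ∑ μ ∈ f.support, monomial (St2 μ) (coeff μ f) with hnf
  have hsub : f - nf ∈ J2 := by
    have e : f - nf = ∑ μ ∈ f.support, (monomial μ (coeff μ f) - monomial (St2 μ) (coeff μ f)) := by
      rw [Finset.sum_sub_distrib, hnf]
      congr 1
      exact f.as_sum
    rw [e]
    refine Ideal.sum_mem _ fun μ _ => ?_
    have e2 : (monomial μ (coeff μ f) : R) - monomial (St2 μ) (coeff μ f)
        = C (coeff μ f) * (monomial μ 1 - monomial (St2 μ) 1) := by
      rw [mul_sub, C_mul_monomial, C_mul_monomial, mul_one]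
    rw [e2]
    exact Ideal.mul_mem_left _ _ (monomial_sub_St2_mem μ)
  have hπnf : pi2 nf = 0 := by
    have : pi2 (f - nf) = 0 := J2_le_ker hsub
    rw [map_sub, hπf, zero_sub, neg_eq_zero] at this
    exact this
  have hnf0 : nf = 0 := by
    rw [hnf]
    ext ρ
    rw [coeff_sum]
    simp only [coeff_monomial, coeff_zero]
    by_cases hex : ∃ μ₀ ∈ f.support, St2 μ₀ = ρ
    · obtain ⟨μ₀, hμ₀s, hμ₀⟩ := hex
      have hcoe : ∀ μ ∈ f.support, (if St2 μ = ρ then coeff μ f else 0)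
          = (if eta2 μ = eta2 μ₀ then coeff μ f else 0) := by
        intro μ _
        congr 1
        apply propext
        constructor
        · intro hS
          rw [← eta2_St2 μ, hS, ← hμ₀, eta2_St2]
        · intro hE
          rw [St2_eq_of_eta2_eq hE, hμ₀]
      rw [Finset.sum_congr rfl hcoe]
      have hπf2 : pi2 nf = ∑ μ ∈ f.support, monomial (eta2 (St2 μ)) (coeff μ f) := by
        rw [hnf, map_sum]
        congr 1
        funext μ
        exact pi2_monomial (St2 μ) (coeff μ f)
      have : coeff (eta2 μ₀) (pi2 nf) = 0 := by rw [hπnf, coeff_zero]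
      rw [hπf2, coeff_sum] at this
      simp only [coeff_monomial, eta2_St2] at this
      exact this
    · push_neg at hex
      refine Finset.sum_eq_zero fun μ hμ => ?_
      rw [if_neg (hex μ hμ)]
  rw [hnf0, sub_zero] at hsub
  exact hsub

lemma J2_isPrime : J2.IsPrime := by
  rw [show J2 = RingHom.ker pi2.toRingHom from le_antisymm J2_le_ker ker_le_J2]
  exact RingHom.ker_isPrime _

/-! ### machinery for J3 = span {x23*x14 - x13*x24} -/

def J3 : Ideal R := Ideal.span {(X 4 * X 6 - X 5 * X 7 : R)}

def pi3 : R →ₐ[ℚ] MvPolynomial (Fin 8) ℚ := aeval ![X 4, X 5, X 6, X 7, X 1 * X 2, X 0 * X 2, X 0 * X 3, X 1 * X 3]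

def eta3 (μ : Fin 8 →₀ ℕ) : Fin 8 →₀ ℕ :=
  Finsupp.equivFunOnFinite.symm ![μ 5 + μ 6, μ 4 + μ 7, μ 5 + μ 4, μ 6 + μ 7, μ 0, μ 1, μ 2, μ 3]

def ee3 (μ : Fin 8 →₀ ℕ) : ℕ := min (μ 4) (μ 6)

def St3 (μ : Fin 8 →₀ ℕ) : Fin 8 →₀ ℕ :=
  Finsupp.equivFunOnFinite.symm ![μ 0, μ 1, μ 2, μ 3, μ 4 - ee3 μ, μ 5 + ee3 μ, μ 6 - ee3 μ, μ 7 + ee3 μ]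

lemma eta3_apply (μ : Fin 8 →₀ ℕ) (j : Fin 8) : eta3 μ j = ![μ 5 + μ 6, μ 4 + μ 7, μ 5 + μ 4, μ 6 + μ 7, μ 0, μ 1, μ 2, μ 3] j := by
  simp [eta3]

lemma St3_apply (μ : Fin 8 →₀ ℕ) (i : Fin 8) : St3 μ i = ![μ 0, μ 1, μ 2, μ 3, μ 4 - ee3 μ, μ 5 + ee3 μ, μ 6 - ee3 μ, μ 7 + ee3 μ] i := by
  simp [St3]

lemma St3_eq_of_eta3_eq {μ ν : Fin 8 →₀ ℕ} (h : eta3 μ = eta3 ν) : St3 μ = St3 ν := by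
  have h0 : eta3 μ 0 = eta3 ν 0 := by rw [h]
  have h1 : eta3 μ 1 = eta3 ν 1 := by rw [h]
  have h2 : eta3 μ 2 = eta3 ν 2 := by rw [h]
  have h3 : eta3 μ 3 = eta3 ν 3 := by rw [h]
  have h4 : eta3 μ 4 = eta3 ν 4 := by rw [h]
  have h5 : eta3 μ 5 = eta3 ν 5 := by rw [h]
  have h6 : eta3 μ 6 = eta3 ν 6 := by rw [h]
  have h7 : eta3 μ 7 = eta3 ν 7 := by rw [h]
  rw [eta3_apply, eta3_apply] at h0 h1 h2 h3 h4 h5 h6 h7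
  simp only [Matrix.cons_val_zero, Matrix.cons_val_one, Matrix.cons_val_two, Matrix.cons_val_three,
    Matrix.cons_val_four, cons_val_five, cons_val_six, cons_val_seven, Matrix.cons_val_succ,
    Matrix.head_cons, Matrix.vecTail, Matrix.vecHead, Function.comp] at h0 h1 h2 h3 h4 h5 h6 h7
  ext i
  rw [St3_apply, St3_apply]
  simp only [ee3]
  fin_cases i <;> simp <;> omega

lemma eta3_St3 (μ : Fin 8 →₀ ℕ) : eta3 (St3 μ) = eta3 μ := by
  have he : ee3 μ = min (μ 4) (μ 6) := rfl
  ext j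
  rw [eta3_apply, eta3_apply]
  simp only [St3_apply]
  fin_cases j <;> simp <;> omega

lemma monomial_sub_St3_mem (μ : Fin 8 →₀ ℕ) :
    (monomial μ (1:ℚ) : R) - monomial (St3 μ) 1 ∈ J3 := by
  have hgen : (X 4 * X 6 - X 5 * X 7 : R) ∈ J3 := Ideal.subset_span rfl
  have he1 : ee3 μ ≤ μ 4 := min_le_left _ _
  have he2 : ee3 μ ≤ μ 6 := min_le_right _ _
  have hA : μ = μ - Finsupp.single 4 (ee3 μ) - Finsupp.single 6 (ee3 μ)
      + ee3 μ • (Finsupp.single 4 1 + Finsupp.single 6 1) := by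
    ext i
    simp only [Finsupp.add_apply, Finsupp.tsub_apply, Finsupp.single_apply, Finsupp.smul_apply,
      smul_eq_mul]
    fin_cases i <;> simp <;> omega
  have hB : St3 μ = μ - Finsupp.single 4 (ee3 μ) - Finsupp.single 6 (ee3 μ)
      + ee3 μ • (Finsupp.single 5 1 + Finsupp.single 7 1) := by
    ext i
    rw [St3_apply]
    simp only [Finsupp.add_apply, Finsupp.tsub_apply, Finsupp.single_apply, Finsupp.smul_apply,
      smul_eq_mul]
    have he : ee3 μ = min (μ 4) (μ 6) := rfl
    fin_cases i <;> simp <;> omega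
  have hfac : ∀ (u v : Fin 8) (τ : Fin 8 →₀ ℕ),
      (monomial (τ + ee3 μ • (Finsupp.single u 1 + Finsupp.single v 1)) (1:ℚ) : R)
        = monomial τ 1 * (X u * X v) ^ ee3 μ := by
    intro u v τ
    simp only [X, monomial_mul, monomial_pow, one_pow, mul_one, one_mul]
  rw [hB]
  nth_rewrite 1 [hA]
  rw [hfac, hfac, ← mul_sub]
  refine Ideal.mul_mem_left _ _ ?_
  rw [J3, Ideal.mem_span_singleton]
  exact sub_dvd_pow_sub_pow _ _ _

lemma pi3_monomial (μ : Fin 8 →₀ ℕ) (c : ℚ) :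
    pi3 (monomial μ c) = monomial (eta3 μ) c := by
  rw [pi3, aeval_monomial, Finsupp.prod_fintype _ _ (fun i => pow_zero _),
    monomial_eq, Finsupp.prod_fintype _ _ (fun i => pow_zero _)]
  have : (algebraMap ℚ (MvPolynomial (Fin 8) ℚ)) c = C c := rfl
  rw [this]
  refine congrArg (fun p => C c * p) ?_
  rw [Fin.prod_univ_eight, Fin.prod_univ_eight]
  simp only [eta3_apply]
  simp only [Matrix.cons_val_zero, Matrix.cons_val_one, Matrix.cons_val_two, Matrix.cons_val_three,
    Matrix.cons_val_four, cons_val_five, cons_val_six, cons_val_seven, Matrix.cons_val_succ,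
    Matrix.head_cons, Matrix.vecTail, Matrix.vecHead, Function.comp]
  rw [pow_add, pow_add, pow_add, pow_add]
  ring

lemma J3_le_ker : J3 ≤ RingHom.ker pi3.toRingHom := by
  rw [J3, Ideal.span_le]
  rintro f hf
  simp only [Set.mem_singleton_iff] at hf
  subst hf
  rw [SetLike.mem_coe]
  show pi3 _ = 0
  simp [pi3]
  ring

lemma ker_le_J3 : RingHom.ker pi3.toRingHom ≤ J3 := by
  intro f hf
  have hπf : pi3 f = 0 := hf
  set nf : R := ∑ μ ∈ f.support, monomial (St3 μ) (coeff μ f) with hnf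
  have hsub : f - nf ∈ J3 := by
    have e : f - nf = ∑ μ ∈ f.support, (monomial μ (coeff μ f) - monomial (St3 μ) (coeff μ f)) := by
      rw [Finset.sum_sub_distrib, hnf]
      congr 1
      exact f.as_sum
    rw [e]
    refine Ideal.sum_mem _ fun μ _ => ?_
    have e2 : (monomial μ (coeff μ f) : R) - monomial (St3 μ) (coeff μ f)
        = C (coeff μ f) * (monomial μ 1 - monomial (St3 μ) 1) := by
      rw [mul_sub, C_mul_monomial, C_mul_monomial, mul_one]
    rw [e2]
    exact Ideal.mul_mem_left _ _ (monomial_sub_St3_mem μ)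
  have hπnf : pi3 nf = 0 := by
    have : pi3 (f - nf) = 0 := J3_le_ker hsub
    rw [map_sub, hπf, zero_sub, neg_eq_zero] at this
    exact this
  have hnf0 : nf = 0 := by
    rw [hnf]
    ext ρ
    rw [coeff_sum]
    simp only [coeff_monomial, coeff_zero]
    by_cases hex : ∃ μ₀ ∈ f.support, St3 μ₀ = ρ
    · obtain ⟨μ₀, hμ₀s, hμ₀⟩ := hex
      have hcoe : ∀ μ ∈ f.support, (if St3 μ = ρ then coeff μ f else 0)
          = (if eta3 μ = eta3 μ₀ then coeff μ f else 0) := by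
        intro μ _
        congr 1
        apply propext
        constructor
        · intro hS
          rw [← eta3_St3 μ, hS, ← hμ₀, eta3_St3]
        · intro hE
          rw [St3_eq_of_eta3_eq hE, hμ₀]
      rw [Finset.sum_congr rfl hcoe]
      have hπf2 : pi3 nf = ∑ μ ∈ f.support, monomial (eta3 (St3 μ)) (coeff μ f) := by
        rw [hnf, map_sum]
        congr 1
        funext μ
        exact pi3_monomial (St3 μ) (coeff μ f)
      have : coeff (eta3 μ₀) (pi3 nf) = 0 := by rw [hπnf, coeff_zero]
      rw [hπf2, coeff_sum] at this
      simp only [coeff_monomial, eta3_St3] at this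
      exact this
    · push_neg at hex
      refine Finset.sum_eq_zero fun μ hμ => ?_
      rw [if_neg (hex μ hμ)]
  rw [hnf0, sub_zero] at hsub
  exact hsub

lemma J3_isPrime : J3.IsPrime := by
  rw [show J3 = RingHom.ker pi3.toRingHom from le_antisymm J3_le_ker ker_le_J3]
  exact RingHom.ker_isPrime _

/-! ### Q2 and Q3 are prime via retraction onto J2 / J3 -/

def phi2 : R →ₐ[ℚ] R := aeval ![X 0, X 1, X 2, X 3, 0, 0, X 6, X 7]
def phi3 : R →ₐ[ℚ] R := aeval ![X 0, 0, X 2, 0, X 4, X 5, X 6, X 7]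

lemma sub_phi2_mem (f : R) : f - phi2 f ∈ Ideal.span {(X 4 : R), X 5} := by
  induction f using MvPolynomial.induction_on with
  | C a => simp [phi2]
  | add p q hp hq =>
    have e : p + q - phi2 (p + q) = (p - phi2 p) + (q - phi2 q) := by
      rw [map_add]; ring
    rw [e]; exact Ideal.add_mem _ hp hq
  | mul_X p n hp =>
    rw [map_mul]
    fin_cases n
    · show p * X 0 - phi2 p * phi2 (X 0) ∈ Ideal.span {(X 4 : R), X 5}
      have e : p * X 0 - phi2 p * phi2 (X 0) = (p - phi2 p) * X 0 := by
        simp [phi2]; ring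
      rw [e]; exact Ideal.mul_mem_right _ _ hp
    · show p * X 1 - phi2 p * phi2 (X 1) ∈ Ideal.span {(X 4 : R), X 5}
      have e : p * X 1 - phi2 p * phi2 (X 1) = (p - phi2 p) * X 1 := by
        simp [phi2]; ring
      rw [e]; exact Ideal.mul_mem_right _ _ hp
    · show p * X 2 - phi2 p * phi2 (X 2) ∈ Ideal.span {(X 4 : R), X 5}
      have e : p * X 2 - phi2 p * phi2 (X 2) = (p - phi2 p) * X 2 := by
        simp [phi2]; ring
      rw [e]; exact Ideal.mul_mem_right _ _ hp
    · show p * X 3 - phi2 p * phi2 (X 3) ∈ Ideal.span {(X 4 : R), X 5}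
      have e : p * X 3 - phi2 p * phi2 (X 3) = (p - phi2 p) * X 3 := by
        simp [phi2]; ring
      rw [e]; exact Ideal.mul_mem_right _ _ hp
    · show p * X 4 - phi2 p * phi2 (X 4) ∈ Ideal.span {(X 4 : R), X 5}
      have e : p * X 4 - phi2 p * phi2 (X 4) = p * X 4 := by
        simp [phi2]
      rw [e]
      exact Ideal.mul_mem_left _ _ (Ideal.subset_span (by simp))
    · show p * X 5 - phi2 p * phi2 (X 5) ∈ Ideal.span {(X 4 : R), X 5}
      have e : p * X 5 - phi2 p * phi2 (X 5) = p * X 5 := by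
        simp [phi2]
      rw [e]
      exact Ideal.mul_mem_left _ _ (Ideal.subset_span (by simp))
    · show p * X 6 - phi2 p * phi2 (X 6) ∈ Ideal.span {(X 4 : R), X 5}
      have e : p * X 6 - phi2 p * phi2 (X 6) = (p - phi2 p) * X 6 := by
        simp [phi2]; ring
      rw [e]; exact Ideal.mul_mem_right _ _ hp
    · show p * X 7 - phi2 p * phi2 (X 7) ∈ Ideal.span {(X 4 : R), X 5}
      have e : p * X 7 - phi2 p * phi2 (X 7) = (p - phi2 p) * X 7 := by
        simp [phi2]; ring
      rw [e]; exact Ideal.mul_mem_right _ _ hp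

lemma sub_phi3_mem (f : R) : f - phi3 f ∈ Ideal.span {(X 1 : R), X 3} := by
  induction f using MvPolynomial.induction_on with
  | C a => simp [phi3]
  | add p q hp hq =>
    have e : p + q - phi3 (p + q) = (p - phi3 p) + (q - phi3 q) := by
      rw [map_add]; ring
    rw [e]; exact Ideal.add_mem _ hp hq
  | mul_X p n hp =>
    rw [map_mul]
    fin_cases n
    · show p * X 0 - phi3 p * phi3 (X 0) ∈ Ideal.span {(X 1 : R), X 3}
      have e : p * X 0 - phi3 p * phi3 (X 0) = (p - phi3 p) * X 0 := by
        simp [phi3]; ring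
      rw [e]; exact Ideal.mul_mem_right _ _ hp
    · show p * X 1 - phi3 p * phi3 (X 1) ∈ Ideal.span {(X 1 : R), X 3}
      have e : p * X 1 - phi3 p * phi3 (X 1) = p * X 1 := by
        simp [phi3]
      rw [e]
      exact Ideal.mul_mem_left _ _ (Ideal.subset_span (by simp))
    · show p * X 2 - phi3 p * phi3 (X 2) ∈ Ideal.span {(X 1 : R), X 3}
      have e : p * X 2 - phi3 p * phi3 (X 2) = (p - phi3 p) * X 2 := by
        simp [phi3]; ring
      rw [e]; exact Ideal.mul_mem_right _ _ hp
    · show p * X 3 - phi3 p * phi3 (X 3) ∈ Ideal.span {(X 1 : R), X 3}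
      have e : p * X 3 - phi3 p * phi3 (X 3) = p * X 3 := by
        simp [phi3]
      rw [e]
      exact Ideal.mul_mem_left _ _ (Ideal.subset_span (by simp))
    · show p * X 4 - phi3 p * phi3 (X 4) ∈ Ideal.span {(X 1 : R), X 3}
      have e : p * X 4 - phi3 p * phi3 (X 4) = (p - phi3 p) * X 4 := by
        simp [phi3]; ring
      rw [e]; exact Ideal.mul_mem_right _ _ hp
    · show p * X 5 - phi3 p * phi3 (X 5) ∈ Ideal.span {(X 1 : R), X 3}
      have e : p * X 5 - phi3 p * phi3 (X 5) = (p - phi3 p) * X 5 := by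
        simp [phi3]; ring
      rw [e]; exact Ideal.mul_mem_right _ _ hp
    · show p * X 6 - phi3 p * phi3 (X 6) ∈ Ideal.span {(X 1 : R), X 3}
      have e : p * X 6 - phi3 p * phi3 (X 6) = (p - phi3 p) * X 6 := by
        simp [phi3]; ring
      rw [e]; exact Ideal.mul_mem_right _ _ hp
    · show p * X 7 - phi3 p * phi3 (X 7) ∈ Ideal.span {(X 1 : R), X 3}
      have e : p * X 7 - phi3 p * phi3 (X 7) = (p - phi3 p) * X 7 := by
        simp [phi3]; ring
      rw [e]; exact Ideal.mul_mem_right _ _ hp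

lemma Q2_eq_comap : Q2 = Ideal.comap phi2.toRingHom J2 := by
  apply le_antisymm
  · rw [Q2, Ideal.span_le]
    rintro g hg
    simp only [Set.mem_insert_iff, Set.mem_singleton_iff] at hg
    rcases hg with rfl|rfl|rfl <;>
      · rw [SetLike.mem_coe, Ideal.mem_comap]
        show _ ∈ J2
        first
        | · have : phi2.toRingHom x13 = 0 := by simp [phi2, x13]
            rw [this]; exact zero_mem _
        | · have : phi2.toRingHom x23 = 0 := by simp [phi2, x23]
            rw [this]; exact zero_mem _
        | · have : phi2.toRingHom (x11 * x22 - x21 * x12) = X 0 * X 1 - X 2 * X 3 := by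
              simp [phi2, x11, x22, x21, x12]
            rw [this]; exact Ideal.subset_span rfl
  · intro f hf
    rw [Ideal.mem_comap] at hf
    have h1 : f - phi2 f ∈ Q2 := by
      refine Ideal.span_mono ?_ (sub_phi2_mem f)
      intro g hg
      simp only [Set.mem_insert_iff, Set.mem_singleton_iff] at hg
      rcases hg with rfl|rfl
      · exact Or.inr (Or.inl rfl)
      · exact Or.inl rfl
    have h2 : phi2 f ∈ Q2 := by
      have hJ : J2 ≤ Q2 := by
        rw [J2, Ideal.span_le]
        rintro g hg
        simp only [Set.mem_singleton_iff] at hg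
        subst hg
        exact Ideal.subset_span (by simp [x11, x22, x21, x12, Set.mem_insert_iff])
      exact hJ hf
    have e : f = (f - phi2 f) + phi2 f := by ring
    rw [e]
    exact Ideal.add_mem _ h1 h2

lemma Q3_eq_comap : Q3 = Ideal.comap phi3.toRingHom J3 := by
  apply le_antisymm
  · rw [Q3, Ideal.span_le]
    rintro g hg
    simp only [Set.mem_insert_iff, Set.mem_singleton_iff] at hg
    rcases hg with rfl|rfl|rfl <;>
      · rw [SetLike.mem_coe, Ideal.mem_comap]
        show _ ∈ J3
        first
        | · have : phi3.toRingHom x12 = 0 := by simp [phi3, x12]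
            rw [this]; exact zero_mem _
        | · have : phi3.toRingHom x22 = 0 := by simp [phi3, x22]
            rw [this]; exact zero_mem _
        | · have : phi3.toRingHom (x23 * x14 - x13 * x24) = X 4 * X 6 - X 5 * X 7 := by
              simp [phi3, x23, x14, x13, x24]
            rw [this]; exact Ideal.subset_span rfl
  · intro f hf
    rw [Ideal.mem_comap] at hf
    have h1 : f - phi3 f ∈ Q3 := by
      refine Ideal.span_mono ?_ (sub_phi3_mem f)
      intro g hg
      simp only [Set.mem_insert_iff, Set.mem_singleton_iff] at hg
      rcases hg with rfl|rfl
      · exact Or.inr (Or.inl rfl)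
      · exact Or.inl rfl
    have h2 : phi3 f ∈ Q3 := by
      have hJ : J3 ≤ Q3 := by
        rw [J3, Ideal.span_le]
        rintro g hg
        simp only [Set.mem_singleton_iff] at hg
        subst hg
        exact Ideal.subset_span (by simp [x23, x14, x13, x24, Set.mem_insert_iff])
      exact hJ hf
    have e : f = (f - phi3 f) + phi3 f := by ring
    rw [e]
    exact Ideal.add_mem _ h1 h2

lemma Q2_isPrime : Q2.IsPrime := by
  rw [Q2_eq_comap]
  haveI := J2_isPrime
  exact Ideal.IsPrime.comap _

lemma Q3_isPrime : Q3.IsPrime := by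
  rw [Q3_eq_comap]
  haveI := J3_isPrime
  exact Ideal.IsPrime.comap _

/-! ### containments and the covering lemma -/

lemma mem_I_of_eq (p q r e : R)
    (h : e = p * (x11 * x22 - x21 * x12) + q * (x12 * x23 - x22 * x13)
      + r * (x13 * x24 - x23 * x14)) : e ∈ I := by
  rw [h]
  refine Ideal.add_mem _ (Ideal.add_mem _ ?_ ?_) ?_ <;>
    exact Ideal.mul_mem_left _ _ (Ideal.subset_span (by simp [Set.mem_insert_iff]))

lemma I_le_Q1 : I ≤ Q1 := by
  rw [I, Ideal.span_le]
  rintro g hg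
  simp only [Set.mem_insert_iff, Set.mem_singleton_iff] at hg
  rcases hg with rfl|rfl|rfl
  · exact Ideal.subset_span (by simp [Set.mem_insert_iff])
  · exact Ideal.subset_span (by simp [Set.mem_insert_iff])
  · rw [SetLike.mem_coe, show (x13 * x24 - x23 * x14 : R) = -(x23 * x14 - x13 * x24) by ring]
    exact Q1.neg_mem (Ideal.subset_span (by simp [Set.mem_insert_iff]))

lemma x13_mem_Q2 : x13 ∈ Q2 := Ideal.subset_span (by simp [Set.mem_insert_iff])
lemma x23_mem_Q2 : x23 ∈ Q2 := Ideal.subset_span (by simp [Set.mem_insert_iff])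
lemma x12_mem_Q3 : x12 ∈ Q3 := Ideal.subset_span (by simp [Set.mem_insert_iff])
lemma x22_mem_Q3 : x22 ∈ Q3 := Ideal.subset_span (by simp [Set.mem_insert_iff])

lemma I_le_Q2 : I ≤ Q2 := by
  rw [I, Ideal.span_le]
  rintro g hg
  simp only [Set.mem_insert_iff, Set.mem_singleton_iff] at hg
  rcases hg with rfl|rfl|rfl
  · exact Ideal.subset_span (by simp [Set.mem_insert_iff])
  · exact Ideal.sub_mem _ (Ideal.mul_mem_left _ _ x23_mem_Q2) (Ideal.mul_mem_left _ _ x13_mem_Q2)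
  · exact Ideal.sub_mem _ (Ideal.mul_mem_right _ _ x13_mem_Q2) (Ideal.mul_mem_right _ _ x23_mem_Q2)

lemma I_le_Q3 : I ≤ Q3 := by
  rw [I, Ideal.span_le]
  rintro g hg
  simp only [Set.mem_insert_iff, Set.mem_singleton_iff] at hg
  rcases hg with rfl|rfl|rfl
  · exact Ideal.sub_mem _ (Ideal.mul_mem_left _ _ x22_mem_Q3) (Ideal.mul_mem_left _ _ x12_mem_Q3)
  · exact Ideal.sub_mem _ (Ideal.mul_mem_right _ _ x12_mem_Q3) (Ideal.mul_mem_right _ _ x22_mem_Q3)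
  · rw [SetLike.mem_coe, show (x13 * x24 - x23 * x14 : R) = -(x23 * x14 - x13 * x24) by ring]
    exact Q3.neg_mem (Ideal.subset_span (by simp [Set.mem_insert_iff]))

lemma cover (P : Ideal R) (hP : P.IsPrime) (hIP : I ≤ P) : Q1 ≤ P ∨ Q2 ≤ P ∨ Q3 ≤ P := by
  have hm1 : x11 * x22 - x21 * x12 ∈ P := hIP (Ideal.subset_span (by simp [Set.mem_insert_iff]))
  have hm2 : x12 * x23 - x22 * x13 ∈ P := hIP (Ideal.subset_span (by simp [Set.mem_insert_iff]))
  have hm3 : x13 * x24 - x23 * x14 ∈ P := hIP (Ideal.subset_span (by simp [Set.mem_insert_iff]))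
  by_cases h2 : x13 ∈ P ∧ x23 ∈ P
  · refine Or.inr (Or.inl ?_)
    rw [Q2, Ideal.span_le]
    rintro g hg
    simp only [Set.mem_insert_iff, Set.mem_singleton_iff] at hg
    rcases hg with rfl|rfl|rfl
    · exact h2.1
    · exact h2.2
    · exact hm1
  by_cases h3 : x12 ∈ P ∧ x22 ∈ P
  · refine Or.inr (Or.inr ?_)
    rw [Q3, Ideal.span_le]
    rintro g hg
    simp only [Set.mem_insert_iff, Set.mem_singleton_iff] at hg
    rcases hg with rfl|rfl|rfl
    · exact h3.1
    · exact h3.2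
    · rw [SetLike.mem_coe, show (x23 * x14 - x13 * x24 : R) = -(x13 * x24 - x23 * x14) by ring]
      exact P.neg_mem hm3
  left
  have hw1 : x12 ∉ P ∨ x22 ∉ P := by tauto
  have hw2 : x13 ∉ P ∨ x23 ∉ P := by tauto
  have hD13 : x11 * x23 - x21 * x13 ∈ P := by
    rcases hw1 with hw|hw
    · have hmem : x12 * (x11 * x23 - x21 * x13) ∈ P :=
        hIP (mem_I_of_eq x13 x11 0 _ (by unfold x11 x22 x21 x12 x23 x13 x14 x24; ring))
      exact (hP.mem_or_mem hmem).resolve_left hw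
    · have hmem : x22 * (x11 * x23 - x21 * x13) ∈ P :=
        hIP (mem_I_of_eq x23 x21 0 _ (by unfold x11 x22 x21 x12 x23 x13 x14 x24; ring))
      exact (hP.mem_or_mem hmem).resolve_left hw
  have hD24 : x12 * x24 - x22 * x14 ∈ P := by
    rcases hw2 with hw|hw
    · have hmem : x13 * (x12 * x24 - x22 * x14) ∈ P :=
        hIP (mem_I_of_eq 0 x14 x12 _ (by unfold x11 x22 x21 x12 x23 x13 x14 x24; ring))
      exact (hP.mem_or_mem hmem).resolve_left hw
    · have hmem : x23 * (x12 * x24 - x22 * x14) ∈ P :=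
        hIP (mem_I_of_eq 0 x24 x22 _ (by unfold x11 x22 x21 x12 x23 x13 x14 x24; ring))
      exact (hP.mem_or_mem hmem).resolve_left hw
  have hD14 : x11 * x24 - x21 * x14 ∈ P := by
    rcases hw2 with hw|hw
    · have h5 : x13 * (x11 * x24 - x21 * x14) - x14 * (x11 * x23 - x21 * x13) ∈ P :=
        hIP (mem_I_of_eq 0 0 x11 _ (by unfold x11 x22 x21 x12 x23 x13 x14 x24; ring))
      have hmem : x13 * (x11 * x24 - x21 * x14) ∈ P := by
        have := P.add_mem h5 (P.mul_mem_left x14 hD13)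
        simpa using this
      exact (hP.mem_or_mem hmem).resolve_left hw
    · have h5 : x23 * (x11 * x24 - x21 * x14) - x24 * (x11 * x23 - x21 * x13) ∈ P :=
        hIP (mem_I_of_eq 0 0 x21 _ (by unfold x11 x22 x21 x12 x23 x13 x14 x24; ring))
      have hmem : x23 * (x11 * x24 - x21 * x14) ∈ P := by
        have := P.add_mem h5 (P.mul_mem_left x24 hD13)
        simpa using this
      exact (hP.mem_or_mem hmem).resolve_left hw
  rw [Q1, Ideal.span_le]
  rintro g hg
  simp only [Set.mem_insert_iff, Set.mem_singleton_iff] at hg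
  rcases hg with rfl|rfl|rfl|rfl|rfl|rfl
  · rw [SetLike.mem_coe, show (x23 * x14 - x13 * x24 : R) = -(x13 * x24 - x23 * x14) by ring]
    exact P.neg_mem hm3
  · rw [SetLike.mem_coe, show (x21 * x14 - x11 * x24 : R) = -(x11 * x24 - x21 * x14) by ring]
    exact P.neg_mem hD14
  · rw [SetLike.mem_coe, show (x22 * x14 - x12 * x24 : R) = -(x12 * x24 - x22 * x14) by ring]
    exact P.neg_mem hD24
  · exact hm2
  · exact hD13
  · exact hm1

/-! ### non-inclusions -/

def pt1 : Fin 8 → ℚ := fun _ => 1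
def pt2 : Fin 8 → ℚ := ![1, 1, 1, 1, 0, 0, 1, 2]
def pt3 : Fin 8 → ℚ := ![1, 0, 2, 0, 1, 1, 1, 1]

lemma Q1_vanish : ∀ f ∈ Q1, eval pt1 f = 0 := by
  have h : Q1 ≤ RingHom.ker (eval pt1) := by
    rw [Q1, Ideal.span_le]
    rintro g hg
    simp only [Set.mem_insert_iff, Set.mem_singleton_iff] at hg
    rcases hg with rfl|rfl|rfl|rfl|rfl|rfl <;>
      · rw [SetLike.mem_coe, RingHom.mem_ker]
        simp [x11, x22, x21, x12, x23, x13, x14, x24, pt1]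
  intro f hf
  exact h hf

lemma Q2_vanish : ∀ f ∈ Q2, eval pt2 f = 0 := by
  have h : Q2 ≤ RingHom.ker (eval pt2) := by
    rw [Q2, Ideal.span_le]
    rintro g hg
    simp only [Set.mem_insert_iff, Set.mem_singleton_iff] at hg
    rcases hg with rfl|rfl|rfl <;>
      · rw [SetLike.mem_coe, RingHom.mem_ker]
        simp [x11, x22, x21, x12, x23, x13, x14, x24, pt2]
  intro f hf
  exact h hf

lemma Q3_vanish : ∀ f ∈ Q3, eval pt3 f = 0 := by
  have h : Q3 ≤ RingHom.ker (eval pt3) := by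
    rw [Q3, Ideal.span_le]
    rintro g hg
    simp only [Set.mem_insert_iff, Set.mem_singleton_iff] at hg
    rcases hg with rfl|rfl|rfl <;>
      · rw [SetLike.mem_coe, RingHom.mem_ker]
        simp [x11, x22, x21, x12, x23, x13, x14, x24, pt3]
  intro f hf
  exact h hf

lemma Q2_not_le_Q1 : ¬ Q2 ≤ Q1 := by
  intro h
  have := Q1_vanish _ (h x13_mem_Q2)
  simp [x13, pt1] at this

lemma Q3_not_le_Q1 : ¬ Q3 ≤ Q1 := by
  intro h
  have := Q1_vanish _ (h x12_mem_Q3)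
  simp [x12, pt1] at this

lemma Q1_not_le_Q2 : ¬ Q1 ≤ Q2 := by
  intro h
  have hg : (x22 * x14 - x12 * x24 : R) ∈ Q1 := Ideal.subset_span (by simp [Set.mem_insert_iff])
  have := Q2_vanish _ (h hg)
  simp [x22, x14, x12, x24, pt2] at this
  norm_num at this

lemma Q3_not_le_Q2 : ¬ Q3 ≤ Q2 := by
  intro h
  have := Q2_vanish _ (h x12_mem_Q3)
  simp [x12, pt2] at this

lemma Q1_not_le_Q3 : ¬ Q1 ≤ Q3 := by
  intro h
  have hg : (x21 * x14 - x11 * x24 : R) ∈ Q1 := Ideal.subset_span (by simp [Set.mem_insert_iff])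
  have := Q3_vanish _ (h hg)
  simp [x21, x14, x11, x24, pt3] at this
  norm_num at this

lemma Q2_not_le_Q3 : ¬ Q2 ≤ Q3 := by
  intro h
  have := Q3_vanish _ (h x13_mem_Q2)
  simp [x13, pt3] at this

end Aux

theorem I_minimalPrimes : I.minimalPrimes = {Q1, Q2, Q3} := by
  ext P
  simp only [Set.mem_insert_iff, Set.mem_singleton_iff]
  rw [Ideal.minimalPrimes, Set.mem_setOf_eq, Ideal.IsMinimalPrime, minimal_iff]
  constructor
  · rintro ⟨⟨hPp, hIP⟩, hmin⟩
    rcases Aux.cover P hPp hIP with h|h|h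
    · exact Or.inl (hmin ⟨Aux.Q1_isPrime, Aux.I_le_Q1⟩ h)
    · exact Or.inr (Or.inl (hmin ⟨Aux.Q2_isPrime, Aux.I_le_Q2⟩ h))
    · exact Or.inr (Or.inr (hmin ⟨Aux.Q3_isPrime, Aux.I_le_Q3⟩ h))
  · rintro (rfl|rfl|rfl)
    · refine ⟨⟨Aux.Q1_isPrime, Aux.I_le_Q1⟩, ?_⟩
      rintro J ⟨hJp, hIJ⟩ hJle
      rcases Aux.cover J hJp hIJ with h|h|h
      · exact le_antisymm h hJle
      · exact absurd (h.trans hJle) Aux.Q2_not_le_Q1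
      · exact absurd (h.trans hJle) Aux.Q3_not_le_Q1
    · refine ⟨⟨Aux.Q2_isPrime, Aux.I_le_Q2⟩, ?_⟩
      rintro J ⟨hJp, hIJ⟩ hJle
      rcases Aux.cover J hJp hIJ with h|h|h
      · exact absurd (h.trans hJle) Aux.Q1_not_le_Q2
      · exact le_antisymm h hJle
      · exact absurd (h.trans hJle) Aux.Q3_not_le_Q2
    · refine ⟨⟨Aux.Q3_isPrime, Aux.I_le_Q3⟩, ?_⟩
      rintro J ⟨hJp, hIJ⟩ hJle
      rcases Aux.cover J hJp hIJ with h|h|h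
      · exact absurd (h.trans hJle) Aux.Q1_not_le_Q3
      · exact absurd (h.trans hJle) Aux.Q2_not_le_Q3
      · exact le_antisymm h hJle

end
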